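/- Let t₀, k > 0, Ξ, h₀ > 0, ρ₀ > 0 be real numbers. Let c, θ : ℝ → ℝ be continuous with 0 < c(t) ≤ 1 and c(t)θ(t) ≥ k for all t ≥ t₀, and let θ be differentiable on [t₀, ∞) with θ'(t) ≤ Ξ for all t ≥ t₀. Let h, ρ : ℝ → ℝ be differentiable with h'(t) = −c(t)θ(t)h(t), ρ'(t) = −θ(t)ρ(t) for all t ≥ t₀, h(t₀) = h₀, ρ(t₀) = ρ₀. Let ε, p : ℝ → ℝ satisfy ε(t) + p(t) = ρ(t)h(t) and θ'(t) = −(3/2)(ε(t) + p(t)) for all t ≥ t₀. Then ε(t) + p(t) → 0 as t → ∞, and −(3/2)(ε(t) + p(t)) ≤ Ξ for all t ≥ t₀. -/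

import Mathlib

open Filter

/-- Proposition 3: a perfect fluid along an expanding congruence in flat FRW with bounded
rate of expansion (`θ̇ ≤ Ξ`), conserved rest-mass (`ρ̇ = −θρ`, `ḣ = −c_s²θh`),
`c_s²(t) ∈ (0,1]` with `c_s²θ ≥ k > 0`, and Raychaudhuri–Friedmann relation
`θ̇ = −(3/2)(ε + p)` has `ε + p → 0` asymptotically and `−(3/2)(ε + p) ≤ Ξ`. -/
theorem prop3_bounded_expansion
    (t₀ k Ξ h₀ ρ₀ : ℝ) (hk : 0 < k) (hh₀ : 0 < h₀) (hρ₀ : 0 < ρ₀)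
    (c θ θ' h ρ ε p : ℝ → ℝ) (hccont : Continuous c) (hθcont : Continuous θ)
    (hc : ∀ t ≥ t₀, 0 < c t ∧ c t ≤ 1)
    (hcθ : ∀ t ≥ t₀, k ≤ c t * θ t)
    (hθd : ∀ t ≥ t₀, HasDerivAt θ (θ' t) t)
    (hθ' : ∀ t ≥ t₀, θ' t ≤ Ξ)
    (hh : ∀ t ≥ t₀, HasDerivAt h (-(c t * θ t * h t)) t)
    (hρ : ∀ t ≥ t₀, HasDerivAt ρ (-(θ t * ρ t)) t)
    (hhinit : h t₀ = h₀) (hρinit : ρ t₀ = ρ₀)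
    (hεp : ∀ t ≥ t₀, ε t + p t = ρ t * h t)
    (hray : ∀ t ≥ t₀, θ' t = -(3 / 2) * (ε t + p t)) :
    Tendsto (fun t => ε t + p t) atTop (nhds 0) ∧
    (∀ t ≥ t₀, -(3 / 2) * (ε t + p t) ≤ Ξ) := by
  -- the bound is immediate from the Raychaudhuri relation
  refine ⟨?_, fun t ht => (hray t ht) ▸ hθ' t ht⟩
  -- integrand g = θ + cθ and its primitive φ
  set g : ℝ → ℝ := fun s => θ s + c s * θ s with hg
  have hgcont : Continuous g := hθcont.add (hccont.mul hθcont)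
  set φ : ℝ → ℝ := fun t => ∫ s in t₀..t, g s with hφ
  have hφd : ∀ t : ℝ, HasDerivAt φ (g t) t := fun t =>
    (hgcont.integral_hasStrictDerivAt t₀ t).hasDerivAt
  -- G = ρ h exp(φ) has zero derivative on [t₀, ∞)
  set G : ℝ → ℝ := fun t => ρ t * h t * Real.exp (φ t) with hG
  have hGd : ∀ x ≥ t₀, HasDerivAt G 0 x := by
    intro x hx
    have h1 : HasDerivAt (fun t => ρ t * h t)
        (-(θ x * ρ x) * h x + ρ x * -(c x * θ x * h x)) x := (hρ x hx).mul (hh x hx)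
    have h2 : HasDerivAt (fun t => Real.exp (φ t)) (Real.exp (φ x) * g x) x :=
      (Real.hasDerivAt_exp (φ x)).comp x (hφd x)
    have : HasDerivAt (fun t => ρ t * h t * Real.exp (φ t)) _ x := h1.mul h2
    convert this using 1
    simp only [hg]
    ring
  -- hence G is constant on [t₀, ∞)
  have hGconst : ∀ t ≥ t₀, G t = G t₀ := by
    intro t ht
    have hcont : ContinuousOn G (Set.Icc t₀ t) := fun x hx =>
      ((hGd x hx.1).continuousAt).continuousWithinAt
    exact constant_of_has_deriv_right_zero hcont
      (fun x hx => ((hGd x hx.1).hasDerivWithinAt)) t (Set.mem_Icc.mpr ⟨ht, le_refl t⟩)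
  have hφ0 : φ t₀ = 0 := by simp [hφ]
  have hFt : ∀ t ≥ t₀, ρ t * h t = ρ₀ * h₀ * Real.exp (-(φ t)) := by
    intro t ht
    have := hGconst t ht
    simp only [hG, hφ0, hρinit, hhinit, Real.exp_zero, mul_one] at this
    have hexp : Real.exp (φ t) ≠ 0 := (Real.exp_pos _).ne'
    field_simp [Real.exp_neg]
    rw [Real.exp_neg, ← this, mul_assoc, mul_inv_cancel₀ hexp, mul_one]
  -- lower bound on φ : φ t ≥ 2k (t - t₀)
  have hgge : ∀ s ≥ t₀, 2 * k ≤ g s := by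
    intro s hs
    have h1 := hcθ s hs
    have ⟨hc0, hc1⟩ := hc s hs
    have hθpos : 0 < θ s := by nlinarith
    have : c s * θ s ≤ θ s := by nlinarith
    simp only [hg]; linarith
  have hφge : ∀ t ≥ t₀, 2 * k * (t - t₀) ≤ φ t := by
    intro t ht
    have hint : (∫ s in t₀..t, (2 * k : ℝ)) ≤ ∫ s in t₀..t, g s := by
      apply intervalIntegral.integral_mono_on ht intervalIntegrable_const
        (hgcont.intervalIntegrable _ _)
      intro x hx; exact hgge x hx.1
    simp only [intervalIntegral.integral_const, smul_eq_mul] at hint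
    simp only [hφ]
    linarith
  -- squeeze
  have hupper : Tendsto (fun t => ρ₀ * h₀ * Real.exp (-(2 * k * (t - t₀)))) atTop (nhds 0) := by
    have h0 : Tendsto (fun t : ℝ => -(2 * k * (t - t₀))) atTop atBot := by
      have : Tendsto (fun t : ℝ => -(2 * k) * (t - t₀)) atTop atBot := by
        rw [tendsto_const_mul_atBot_of_neg (by linarith : -(2 * k) < 0)]
        exact tendsto_atTop_add_const_right _ _ tendsto_id
      convert this using 2; ring
    have := (Real.tendsto_exp_atBot.comp h0).const_mul (ρ₀ * h₀)
    simpa using this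
  have hsq : Tendsto (fun t => ρ t * h t) atTop (nhds 0) := by
    apply squeeze_zero' (g := fun t => ρ₀ * h₀ * Real.exp (-(2 * k * (t - t₀))))
      ?_ ?_ hupper
    · filter_upwards [eventually_ge_atTop t₀] with t ht
      rw [hFt t ht]
      positivity
    · filter_upwards [eventually_ge_atTop t₀] with t ht
      rw [hFt t ht]
      have := Real.exp_le_exp.mpr (neg_le_neg (hφge t ht))
      nlinarith [mul_pos hρ₀ hh₀, Real.exp_pos (-(φ t))]
  apply hsq.congr'
  filter_upwards [eventually_ge_atTop t₀] with t ht
  exact (hεp t ht).symm
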